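/- Let μ be a matching that complies with eligibility requirements, is non-wasteful, and respects priorities. Define f̄^μ_c = min_{π_c} μ⁻¹(c) if |μ⁻¹(c)| = r_c and f̄^μ_c = ∅ otherwise, and define f̲^μ_c = min_{π_c} { i ∈ μ(I) : i π_c max_{π_c}((I ∖ μ(I)) ∪ {∅}) } if max_{π_c}((I ∖ μ(I)) ∪ {∅}) ≠ ∅ and f̲^μ_c = ∅ otherwise. Then a pair (g, μ) is a cutoff equilibrium if and only if f̄^μ_c weakly-π_c g_c weakly-π_c f̲^μ_c for every category c. -/

import Mathlib

open Finset

section ReserveSystem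

variable {I C : Type*} [Fintype I] [DecidableEq I] [Fintype C] [DecidableEq C]

/-- Patient `i` is eligible for category `c` (i.e. `i π_c ∅`). Priorities are encoded by
injective score functions `pr c : Option I → ℕ`, where `none` stands for `∅` and a
higher score means a higher priority. -/
def Elig (pr : C → Option I → ℕ) (c : C) (i : I) : Prop :=
  pr c none < pr c (some i)

instance (pr : C → Option I → ℕ) (c : C) (i : I) : Decidable (Elig pr c i) := by
  unfold Elig; infer_instance

/-- A matching assigns each patient a category or `none`, respecting capacities `r`. -/
def IsMatching (r : C → ℕ) (μ : I → Option C) : Prop :=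
  ∀ c : C, (univ.filter (fun i => μ i = some c)).card ≤ r c

/-- `μ` complies with eligibility requirements. -/
def CompliesEligibility (pr : C → Option I → ℕ) (μ : I → Option C) : Prop :=
  ∀ i c, μ i = some c → Elig pr c i

/-- `μ` is non-wasteful. -/
def NonWasteful (pr : C → Option I → ℕ) (r : C → ℕ) (μ : I → Option C) : Prop :=
  ∀ i c, Elig pr c i → μ i = none →
    (univ.filter (fun j => μ j = some c)).card = r c

/-- `μ` respects priorities. -/
def RespectsPriorities (pr : C → Option I → ℕ) (μ : I → Option C) : Prop :=
  ∀ i i' c, μ i = some c → μ i' = none → pr c (some i') < pr c (some i)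

/-- A cutoff vector: `f c ∈ I ∪ {∅}` with `f c` weakly `π_c`-above `∅`. -/
def IsCutoffVector (pr : C → Option I → ℕ) (f : C → Option I) : Prop :=
  ∀ c, pr c none ≤ pr c (f c)

/-- `c` belongs to the budget set `B_i(f)`. -/
def InBudget (pr : C → Option I → ℕ) (f : C → Option I) (i : I) (c : C) : Prop :=
  pr c (f c) ≤ pr c (some i)

/-- `(f, μ)` is a cutoff equilibrium: `f` is a cutoff vector, every matched patient is
matched to a category in her budget set, every patient with a nonempty budget set is
matched to a category in her budget set, and every category with unfilled capacity has
cutoff `∅`. -/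
def CutoffEquilibrium (pr : C → Option I → ℕ) (r : C → ℕ) (f : C → Option I)
    (μ : I → Option C) : Prop :=
  IsCutoffVector pr f ∧
  (∀ i c, μ i = some c → InBudget pr f i c) ∧
  (∀ i, (∃ c, InBudget pr f i c) → ∃ c, μ i = some c ∧ InBudget pr f i c) ∧
  (∀ c, (univ.filter (fun i => μ i = some c)).card < r c → f c = none)

/-- `f` is the maximum cutoff vector `f̄^μ` of matching `μ`:
`f̄^μ_c = min_{π_c} μ⁻¹(c)` when category `c` is full, and `∅` otherwise. -/
def IsMaxCutoff (pr : C → Option I → ℕ) (r : C → ℕ) (μ : I → Option C)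
    (f : C → Option I) : Prop :=
  ∀ c, ((univ.filter (fun i => μ i = some c)).card = r c ∧
          ∃ m, f c = some m ∧ μ m = some c ∧
            ∀ j, μ j = some c → pr c (some m) ≤ pr c (some j))
    ∨ ((univ.filter (fun i => μ i = some c)).card ≠ r c ∧ f c = none)

/-- `f` is the minimum cutoff vector `f̲^μ` of matching `μ`:
if `x_c := max_{π_c}((I ∖ μ(I)) ∪ {∅})` is a patient, then
`f̲^μ_c = min_{π_c} { i ∈ μ(I) : i π_c x_c }`, and `f̲^μ_c = ∅` otherwise. -/
def IsMinCutoff (pr : C → Option I → ℕ) (μ : I → Option C) (f : C → Option I) : Prop :=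
  ∀ c, ((∃ x, μ x = none ∧ pr c none < pr c (some x) ∧
          (∀ y, μ y = none → pr c (some y) ≤ pr c (some x)) ∧
          ∃ m, f c = some m ∧ μ m ≠ none ∧ pr c (some x) < pr c (some m) ∧
            ∀ j, μ j ≠ none → pr c (some x) < pr c (some j) →
              pr c (some m) ≤ pr c (some j))
    ∨ ((∀ x, μ x = none → pr c (some x) < pr c none) ∧ f c = none))

/-- Lemma 1: `(g, μ)` is a cutoff equilibrium iff `f̄^μ_c ⪰_{π_c} g_c ⪰_{π_c} f̲^μ_c`
for every category `c`. -/
theorem cutoff_equilibrium_interval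
    (pr : C → Option I → ℕ) (hpr : ∀ c, Function.Injective (pr c))
    (r : C → ℕ) (μ : I → Option C) (hμ : IsMatching r μ)
    (h1 : CompliesEligibility pr μ) (h2 : NonWasteful pr r μ)
    (h3 : RespectsPriorities pr μ)
    (fbar : C → Option I) (hfbar : IsMaxCutoff pr r μ fbar)
    (fmin : C → Option I) (hfmin : IsMinCutoff pr μ fmin)
    (g : C → Option I) :
    CutoffEquilibrium pr r g μ ↔
      ∀ c, pr c (g c) ≤ pr c (fbar c) ∧ pr c (fmin c) ≤ pr c (g c) := by
  constructor
  · rintro ⟨hcv, hmb, hne, hfill⟩ c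
    constructor
    · rcases hfbar c with ⟨hcard, m, hfc, hμm, hmin⟩ | ⟨hcard, hfc⟩
      · rw [hfc]; exact hmb m c hμm
      · rw [hfc, hfill c (lt_of_le_of_ne (hμ c) hcard)]
    · rcases hfmin c with ⟨x, hx0, hxe, hxmax, m, hfc, hm0, hxm, hmmin⟩ | ⟨_, hfc⟩
      · rw [hfc]
        have hxb : ¬ InBudget pr g x c := by
          intro hb
          obtain ⟨c', hc', _⟩ := hne x ⟨c, hb⟩
          rw [hx0] at hc'; cases hc'
        have hxg : pr c (some x) < pr c (g c) := lt_of_not_ge hxb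
        rcases hg : g c with _ | k
        · rw [hg] at hxg; exact absurd hxg (not_lt_of_ge (le_of_lt hxe))
        · rw [hg] at hxg
          have hk : μ k ≠ none := fun h0 =>
            absurd (hxmax k h0) (not_le_of_gt hxg)
          exact hmmin k hk hxg
      · rw [hfc]; exact hcv c
  · intro h
    have hcv : IsCutoffVector pr g := by
      intro c
      rcases hfmin c with ⟨x, _, hxe, _, m, hfc, _, hxm, _⟩ | ⟨_, hfc⟩
      · have hc := (h c).2; rw [hfc] at hc
        exact le_of_lt (lt_of_lt_of_le (hxe.trans hxm) hc)
      · have hc := (h c).2; rw [hfc] at hc; exact hc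
    have hmb : ∀ i c, μ i = some c → InBudget pr g i c := by
      intro i c hic
      have hgb := (h c).1
      rcases hfbar c with ⟨_, m, hfc, _, hmin⟩ | ⟨_, hfc⟩
      · rw [hfc] at hgb; exact hgb.trans (hmin i hic)
      · rw [hfc] at hgb
        exact hgb.trans (le_of_lt (h1 i c hic))
    refine ⟨hcv, hmb, ?_, ?_⟩
    · rintro i ⟨c, hb⟩
      rcases hi : μ i with _ | c'
      · exfalso
        rcases hfmin c with ⟨x, _, _, hxmax, m, hfc, _, hxm, _⟩ | ⟨hall, hfc⟩
        · have hgc := (h c).2; rw [hfc] at hgc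
          exact absurd hxm (not_lt_of_ge ((hgc.trans hb).trans (hxmax i hi)))
        · have h1' := hall i hi
          have h2' : pr c none ≤ pr c (some i) := (hcv c).trans hb
          omega
      · exact ⟨c', rfl, hmb i c' hi⟩
    · intro c hlt
      rcases hfbar c with ⟨hcard, _⟩ | ⟨_, hfc⟩
      · omega
      · have h1' := (h c).1; rw [hfc] at h1'
        exact hpr c (le_antisymm h1' (hcv c))

end ReserveSystem
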